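/- Let G₁ and G₂ be finite simple graphs with replaceable edges (e₁, e₂, g), where e₁ = (u₁,u₂) ∈ E(G₁), e₂ = (v₁,v₂) ∈ E(G₂), and g : {u₁,u₂} → {v₁,v₂} is the witnessing bijection. Then in the edge-deleted graphs G₁ − e₁ and G₂ − e₂, the sets {u₁,u₂} and {v₁,v₂} remain removal cospectral with the same bijection g. -/

import Mathlib

open scoped Classical

/-- Two finite simple graphs are cospectral if their adjacency matrices have the same
characteristic polynomial. -/
def Cospectral {V W : Type*} [Fintype V] [Fintype W]
    (G : SimpleGraph V) (H : SimpleGraph W) : Prop :=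
  (SimpleGraph.adjMatrix ℤ G).charpoly = (SimpleGraph.adjMatrix ℤ H).charpoly

/-- The image of a set `X` (intersected with `S`) under a bijection `f : S ≃ T`. -/
def Equiv.mapSet {V W : Type*} {S : Set V} {T : Set W} (f : S ≃ T) (X : Set V) : Set W :=
  Subtype.val '' (f '' (Subtype.val ⁻¹' X))

/-- `S ⊆ V(G)` and `T ⊆ V(H)` are removal cospectral with witnessing bijection `f : S ≃ T`:
for every `X ⊆ S`, deleting the vertices of `X` from `G` and of `f(X)` from `H` yields
cospectral graphs. -/
def RemovalCospectral {V W : Type*} [Fintype V] [Fintype W]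
    (G : SimpleGraph V) (H : SimpleGraph W) (S : Set V) (T : Set W) (f : S ≃ T) : Prop :=
  ∀ X : Set V, X ⊆ S → Cospectral (G.induce Xᶜ) (H.induce (Equiv.mapSet f X)ᶜ)

open Polynomial Matrix SimpleGraph

/-- canonical charpoly of a graph, depending only on a `Finite` instance
(which is proof-irrelevant). -/
noncomputable def cp {V : Type*} [Finite V] (G : SimpleGraph V) : Polynomial ℤ :=
  letI := Fintype.ofFinite V
  letI : DecidableEq V := Classical.decEq V
  letI : DecidableRel G.Adj := fun _ _ => Classical.propDecidable _
  (SimpleGraph.adjMatrix ℤ G).charpoly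

lemma adjMatrix_irrel {V : Type*} (G : SimpleGraph V) {R1 R2 : DecidableRel G.Adj} :
    @SimpleGraph.adjMatrix ℤ V G R1 _ _ = @SimpleGraph.adjMatrix ℤ V G R2 _ _ := by
  refine Matrix.ext fun i j => ?_
  have hr : R1 i j = R2 i j := Subsingleton.elim _ _
  show @ite ℤ (G.Adj i j) (R1 i j) 1 0 = @ite ℤ (G.Adj i j) (R2 i j) 1 0
  rw [hr]

lemma charpoly_eq_cp {V : Type*} {F1 : Fintype V} {D1 : DecidableEq V} (G : SimpleGraph V)
    {R1 : DecidableRel G.Adj} :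
    @Matrix.charpoly ℤ _ V D1 F1 (@SimpleGraph.adjMatrix ℤ V G R1 _ _) = cp G := by
  unfold cp
  have h1 : F1 = Fintype.ofFinite V := Subsingleton.elim _ _
  have h2 : D1 = Classical.decEq V := Subsingleton.elim _ _
  rw [← h1, ← h2]
  exact congrArg _ (adjMatrix_irrel G)

lemma cospectral_iff_cp {V W : Type*} {FV : Fintype V} {FW : Fintype W} {G : SimpleGraph V}
    {H : SimpleGraph W} : @Cospectral V W FV FW G H ↔ cp G = cp H :=
  ⟨fun h => (charpoly_eq_cp G).symm.trans (Eq.trans h (charpoly_eq_cp H)),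
   fun h => (charpoly_eq_cp G).trans (h.trans (charpoly_eq_cp H).symm)⟩

lemma cp_graph_congr {V : Type*} [Finite V] {G G' : SimpleGraph V} (h : G = G') :
    cp G = cp G' := by subst h; rfl

lemma cp_induce_set_congr {V : Type*} [Finite V] (G : SimpleGraph V) {s t : Set V}
    (h : s = t) : cp (G.induce s) = cp (G.induce t) := by subst h; rfl


noncomputable def cEnt {V : Type*} (G : SimpleGraph V) (i j : V) : Polynomial ℤ :=
  if i = j then X else if G.Adj i j then -1 else 0

lemma cEnt_charmatrix {V : Type*} [Fintype V] [DecidableEq V] (G : SimpleGraph V)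
    [DecidableRel G.Adj] (i j : V) :
    charmatrix (adjMatrix ℤ G) i j = cEnt G i j := by
  by_cases hij : i = j
  · subst hij
    rw [charmatrix_apply_eq, cEnt, if_pos rfl]
    simp
  · rw [charmatrix_apply_ne _ _ _ hij, cEnt, if_neg hij]
    by_cases ha : G.Adj i j
    · rw [if_pos ha]; simp [ha]
    · rw [if_neg ha]; simp [ha]

lemma cEnt_symm {V : Type*} (G : SimpleGraph V) (i j : V) : cEnt G i j = cEnt G j i := by
  unfold cEnt
  by_cases hij : i = j
  · simp [hij]
  · rw [if_neg hij, if_neg (Ne.symm hij)]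
    by_cases ha : G.Adj i j
    · rw [if_pos ha, if_pos ha.symm]
    · rw [if_neg ha, if_neg fun h => ha h.symm]

lemma cEnt_induce {V : Type*} (G : SimpleGraph V) (s : Set V) (i j : s) :
    cEnt (G.induce s) i j = cEnt G i j := by
  unfold cEnt
  by_cases hij : i = j
  · simp [hij]
  · rw [if_neg hij, if_neg (fun h => hij (Subtype.ext h))]
    have : (G.induce s).Adj i j ↔ G.Adj i j := by simp
    by_cases ha : G.Adj (i : V) (j : V)
    · rw [if_pos (this.mpr ha), if_pos ha]
    · rw [if_neg (fun h => ha (this.mp h)), if_neg ha]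

lemma cEnt_natDegree_le {V : Type*} (G : SimpleGraph V) (i j : V) :
    (cEnt G i j).natDegree ≤ 1 := by
  unfold cEnt
  split_ifs <;> simp [natDegree_X]

lemma cEnt_off_natDegree {V : Type*} (G : SimpleGraph V) {i j : V} (h : i ≠ j) :
    (cEnt G i j).natDegree = 0 := by
  unfold cEnt
  rw [if_neg h]
  split_ifs <;> simp

lemma cEnt_adj {V : Type*} (G : SimpleGraph V) {i j : V} (h : G.Adj i j) :
    cEnt G i j = -1 := by
  unfold cEnt
  rw [if_neg h.ne, if_pos h]

lemma natDegree_adjugate_le {n : Type*} [Fintype n] [DecidableEq n]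
    (M : Matrix n n (Polynomial ℤ)) (hM : ∀ i j, (M i j).natDegree ≤ 1) (i j : n) :
    (adjugate M i j).natDegree ≤ Fintype.card n - 1 := by
  rw [Matrix.adjugate_apply, Matrix.det_apply]
  apply Polynomial.natDegree_sum_le_of_forall_le
  intro σ _
  have h1 : (Equiv.Perm.sign σ • ∏ x, (M.updateRow j (Pi.single i 1)) (σ x) x).natDegree
      = (∏ x, (M.updateRow j (Pi.single i 1)) (σ x) x).natDegree := by
    rcases Int.units_eq_one_or (Equiv.Perm.sign σ) with h | h <;>
      simp [h, Units.smul_def]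
  rw [h1]
  -- split off the index x₀ = σ⁻¹ j
  have hmem : (σ⁻¹ j) ∈ (Finset.univ : Finset n) := Finset.mem_univ _
  rw [← Finset.mul_prod_erase _ _ hmem]
  refine (Polynomial.natDegree_mul_le).trans ?_
  have hx0 : σ (σ⁻¹ j) = j := Equiv.apply_symm_apply σ j
  have h2 : (M.updateRow j (Pi.single i 1)) (σ (σ⁻¹ j)) (σ⁻¹ j) = (Pi.single i 1 : _ → Polynomial ℤ) (σ⁻¹ j) := by
    rw [hx0, Matrix.updateRow_self]
  rw [h2]
  have h3 : ((Pi.single i 1 : _ → Polynomial ℤ) (σ⁻¹ j)).natDegree = 0 := by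
    rw [Pi.single_apply]
    split_ifs <;> simp
  rw [h3, zero_add]
  refine (Polynomial.natDegree_prod_le _ _).trans ?_
  have h4 : ∀ x ∈ Finset.univ.erase (σ⁻¹ j),
      ((M.updateRow j (Pi.single i 1)) (σ x) x).natDegree ≤ 1 := by
    intro x hx
    have hxne : σ x ≠ j := by
      intro hc
      exact (Finset.mem_erase.mp hx).1 (by rw [← hc] at *; exact (Equiv.symm_apply_apply σ x).symm)
    rw [Matrix.updateRow_ne hxne]
    exact hM _ _
  calc ∑ x ∈ Finset.univ.erase (σ⁻¹ j), ((M.updateRow j (Pi.single i 1)) (σ x) x).natDegree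
      ≤ ∑ _x ∈ Finset.univ.erase (σ⁻¹ j), 1 := Finset.sum_le_sum h4
    _ = (Finset.univ.erase (σ⁻¹ j)).card := by simp
    _ = Fintype.card n - 1 := by rw [Finset.card_erase_of_mem hmem, Finset.card_univ]

lemma cp_induce_of_eq_univ {V : Type*} [Fintype V] (G : SimpleGraph V) (s : Set V)
    (hs : s = Set.univ) :
    cp (G.induce s) = cp G := by
  have old : (adjMatrix ℤ (G.induce s)).charpoly = (adjMatrix ℤ G).charpoly := by
    let e : s ≃ V := Equiv.ofBijective Subtype.val
      ⟨Subtype.val_injective, fun x => ⟨⟨x, hs ▸ trivial⟩, rfl⟩⟩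
    have h : adjMatrix ℤ (G.induce s) = Matrix.reindex e.symm e.symm (adjMatrix ℤ G) := by
      ext i j
      rfl
    rw [h, Matrix.charpoly_reindex]
  exact ((charpoly_eq_cp (G.induce s)).symm.trans old).trans (charpoly_eq_cp G)

lemma induce_deleteEdges_eq {V : Type*} (G : SimpleGraph V) {u v w : V} {X : Set V}
    (hw : w ∈ X) (hw' : w = u ∨ w = v) :
    (G.deleteEdges {s(u,v)}).induce Xᶜ = G.induce Xᶜ := by
  ext a b
  simp only [comap_adj, Function.Embedding.coe_subtype, deleteEdges_adj, Set.mem_singleton_iff]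
  constructor
  · rintro ⟨h1, -⟩; exact h1
  · intro h1
    refine ⟨h1, fun hc => ?_⟩
    rw [Sym2.eq_iff] at hc
    have ha := a.2
    have hb := b.2
    rcases hc with ⟨rfl, rfl⟩ | ⟨rfl, rfl⟩ <;> rcases hw' with rfl | rfl <;>
      first
        | exact ha hw
        | exact hb hw

set_option maxHeartbeats 1000000 in
lemma key_lemma {V : Type*} [Fintype V] (G : SimpleGraph V) (u v : V) (h : G.Adj u v) :
    ∃ q : Polynomial ℤ,
      cp (G.induce ({u,v}ᶜ : Set V)) * cp G
        = cp (G.induce ({u}ᶜ : Set V)) * cp (G.induce ({v}ᶜ : Set V)) - q ^ 2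
      ∧ cp (G.deleteEdges {s(u,v)})
        = cp G - cp (G.induce ({u,v}ᶜ : Set V)) - 2 * q
      ∧ (q + cp (G.induce ({u,v}ᶜ : Set V))).degree
          < (cp (G.induce ({u,v}ᶜ : Set V))).degree := by
  have huv : u ≠ v := h.ne
  set c : Set V := ({u, v} : Set V)ᶜ with hcdef
  have hmem : ∀ x : c, (x : V) ≠ u ∧ (x : V) ≠ v := by
    rintro ⟨x, hx⟩
    have : x ∉ ({u, v} : Set V) := hx
    simp only [Set.mem_insert_iff, Set.mem_singleton_iff, not_or] at this
    exact this
  let p : Fin 2 → V := ![u, v]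
  have hp0 : p 0 = u := rfl
  have hp1 : p 1 = v := rfl
  have hpinj : Function.Injective p := by
    intro a b hab
    fin_cases a <;> fin_cases b <;> simp_all [p] <;> exact absurd hab huv <;> rfl
  have hpmem : ∀ j, p j ∈ ({u, v} : Set V) := by
    intro j; fin_cases j <;> simp [p]
  -- the index equivalence
  let f : (c ⊕ Fin 2) → V := Sum.elim Subtype.val p
  have hfbij : Function.Bijective f := by
    constructor
    · rintro (x | i) (y | j) hxy
      · exact congrArg Sum.inl (Subtype.ext hxy)
      · have hxy' : (x : V) = p j := hxy
        exact absurd (hxy'.symm ▸ hpmem j) x.2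
      · have hxy' : p i = (y : V) := hxy
        exact absurd (hxy' ▸ hpmem i) y.2
      · exact congrArg Sum.inr (hpinj hxy)
    · intro x
      by_cases hx : x ∈ ({u, v} : Set V)
      · rcases hx with rfl | rfl
        · exact ⟨Sum.inr 0, rfl⟩
        · exact ⟨Sum.inr 1, rfl⟩
      · exact ⟨Sum.inl ⟨x, hx⟩, rfl⟩
  let e₂ : (c ⊕ Fin 2) ≃ V := Equiv.ofBijective f hfbij
  have he₂l : ∀ i : c, e₂ (Sum.inl i) = (i : V) := fun _ => rfl
  have he₂r : ∀ j, e₂ (Sum.inr j) = p j := fun _ => rfl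
  -- blocks over ℤ[X]
  let Ahat : Matrix c c (Polynomial ℤ) := charmatrix (adjMatrix ℤ (G.induce c))
  let Bhat : Matrix c (Fin 2) (Polynomial ℤ) := Matrix.of fun i j => cEnt G (i : V) (p j)
  let Chat : Matrix (Fin 2) c (Polynomial ℤ) := Matrix.of fun j i => cEnt G (p j) (i : V)
  let Dhat : Matrix (Fin 2) (Fin 2) (Polynomial ℤ) := Matrix.of fun j k => cEnt G (p j) (p k)
  let EE : Matrix (Fin 2) (Fin 2) (Polynomial ℤ) := Matrix.of ![![0, 1], ![1, 0]]
  have hAhat : ∀ i j : c, Ahat i j = cEnt G (i : V) (j : V) := by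
    intro i j
    show charmatrix (adjMatrix ℤ (G.induce c)) i j = _
    rw [cEnt_charmatrix, cEnt_induce]
  -- edge-deletion entries
  have hdel : ∀ a b : V, s(a, b) ≠ s(u, v) →
      cEnt (G.deleteEdges {s(u, v)}) a b = cEnt G a b := by
    intro a b hne
    have hadj : (G.deleteEdges {s(u, v)}).Adj a b ↔ G.Adj a b := by
      simp [deleteEdges_adj, hne]
    unfold cEnt
    simp only [hadj]
  have hdel_uv : cEnt (G.deleteEdges {s(u, v)}) u v = 0 := by
    unfold cEnt
    rw [if_neg huv, if_neg]
    simp [deleteEdges_adj]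
  have hdel_vu : cEnt (G.deleteEdges {s(u, v)}) v u = 0 := by
    rw [cEnt_symm]; exact hdel_uv
  have hne_c : ∀ (x : c) (b : V), s((x : V), b) ≠ s(u, v) := by
    intro x b hc
    rw [Sym2.eq_iff] at hc
    rcases hc with ⟨h1, -⟩ | ⟨h1, -⟩
    · exact (hmem x).1 h1
    · exact (hmem x).2 h1
  -- block identification for G
  have L1 : (charmatrix (adjMatrix ℤ G)).submatrix e₂ e₂ = Matrix.fromBlocks Ahat Bhat Chat Dhat := by
    refine Matrix.ext ?_
    rintro (i | i) (j | j)
    · show charmatrix (adjMatrix ℤ G) (i : V) (j : V) = Ahat i j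
      rw [cEnt_charmatrix, hAhat]
    · show charmatrix (adjMatrix ℤ G) (i : V) (p j) = Bhat i j
      rw [cEnt_charmatrix]; rfl
    · show charmatrix (adjMatrix ℤ G) (p i) (j : V) = Chat i j
      rw [cEnt_charmatrix]; rfl
    · show charmatrix (adjMatrix ℤ G) (p i) (p j) = Dhat i j
      rw [cEnt_charmatrix]; rfl
  -- block identification for G - e
  have L4 : (charmatrix (adjMatrix ℤ (G.deleteEdges {s(u, v)}))).submatrix e₂ e₂
      = Matrix.fromBlocks Ahat Bhat Chat (Dhat + EE) := by
    refine Matrix.ext ?_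
    rintro (i | i) (j | j)
    · show charmatrix (adjMatrix ℤ (G.deleteEdges {s(u, v)})) (i : V) (j : V) = Ahat i j
      rw [cEnt_charmatrix, hdel _ _ (hne_c i _), hAhat]
    · show charmatrix (adjMatrix ℤ (G.deleteEdges {s(u, v)})) (i : V) (p j) = Bhat i j
      rw [cEnt_charmatrix, hdel _ _ (hne_c i _)]; rfl
    · show charmatrix (adjMatrix ℤ (G.deleteEdges {s(u, v)})) (p i) (j : V) = Chat i j
      rw [cEnt_charmatrix, cEnt_symm, hdel _ _ (hne_c j _), cEnt_symm]; rfl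
    · show charmatrix (adjMatrix ℤ (G.deleteEdges {s(u, v)})) (p i) (p j) = (Dhat + EE) i j
      rw [cEnt_charmatrix]
      fin_cases i <;> fin_cases j
      · show cEnt _ u u = Dhat 0 0 + EE 0 0
        have : EE 0 0 = 0 := rfl
        rw [this, add_zero, hdel _ _ (by simp [Sym2.eq_iff, huv, huv.symm])]
        rfl
      · show cEnt _ u v = Dhat 0 1 + EE 0 1
        have h1 : EE 0 1 = 1 := rfl
        have h2 : Dhat 0 1 = -1 := cEnt_adj G h
        rw [hdel_uv, h1, h2]; ring
      · show cEnt _ v u = Dhat 1 0 + EE 1 0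
        have h1 : EE 1 0 = 1 := rfl
        have h2 : Dhat 1 0 = -1 := cEnt_adj G h.symm
        rw [hdel_vu, h1, h2]; ring
      · show cEnt _ v v = Dhat 1 1 + EE 1 1
        have : EE 1 1 = 0 := rfl
        rw [this, add_zero, hdel _ _ (by simp [Sym2.eq_iff, huv, huv.symm])]
        rfl
  -- equivalence for G - u
  have hvnu : v ∈ ({u}ᶜ : Set V) := Set.mem_compl_singleton_iff.mpr huv.symm
  have hunv : u ∈ ({v}ᶜ : Set V) := Set.mem_compl_singleton_iff.mpr huv
  let fu : (c ⊕ Fin 1) → ({u}ᶜ : Set V) :=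
    Sum.elim (fun i => ⟨(i : V), Set.mem_compl_singleton_iff.mpr (hmem i).1⟩) (fun _ => ⟨v, hvnu⟩)
  have hfubij : Function.Bijective fu := by
    constructor
    · rintro (x | i) (y | j) hxy
      · have h' : (x : V) = y := congrArg (fun z : ({u}ᶜ : Set V) => (z : V)) hxy
        exact congrArg Sum.inl (Subtype.ext h')
      · have h' : (x : V) = v := congrArg (fun z : ({u}ᶜ : Set V) => (z : V)) hxy
        exact absurd h' (hmem x).2
      · have h' : v = (y : V) := congrArg (fun z : ({u}ᶜ : Set V) => (z : V)) hxy
        exact absurd h'.symm (hmem y).2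
      · exact congrArg Sum.inr (Subsingleton.elim i j)
    · rintro ⟨x, hx⟩
      by_cases hxv : x = v
      · exact ⟨Sum.inr 0, Subtype.ext hxv.symm⟩
      · refine ⟨Sum.inl ⟨x, ?_⟩, rfl⟩
        intro hc
        rcases hc with rfl | hc
        · exact (Set.mem_compl_singleton_iff.mp hx) rfl
        · exact hxv hc
  let e_u : (c ⊕ Fin 1) ≃ ({u}ᶜ : Set V) := Equiv.ofBijective fu hfubij
  let fv : (c ⊕ Fin 1) → ({v}ᶜ : Set V) :=
    Sum.elim (fun i => ⟨(i : V), Set.mem_compl_singleton_iff.mpr (hmem i).2⟩) (fun _ => ⟨u, hunv⟩)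
  have hfvbij : Function.Bijective fv := by
    constructor
    · rintro (x | i) (y | j) hxy
      · have h' : (x : V) = y := congrArg (fun z : ({v}ᶜ : Set V) => (z : V)) hxy
        exact congrArg Sum.inl (Subtype.ext h')
      · have h' : (x : V) = u := congrArg (fun z : ({v}ᶜ : Set V) => (z : V)) hxy
        exact absurd h' (hmem x).1
      · have h' : u = (y : V) := congrArg (fun z : ({v}ᶜ : Set V) => (z : V)) hxy
        exact absurd h'.symm (hmem y).1
      · exact congrArg Sum.inr (Subsingleton.elim i j)
    · rintro ⟨x, hx⟩
      by_cases hxu : x = u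
      · exact ⟨Sum.inr 0, Subtype.ext hxu.symm⟩
      · refine ⟨Sum.inl ⟨x, ?_⟩, rfl⟩
        intro hc
        rcases hc with rfl | hc
        · exact hxu rfl
        · exact (Set.mem_compl_singleton_iff.mp hx) hc
  let e_v : (c ⊕ Fin 1) ≃ ({v}ᶜ : Set V) := Equiv.ofBijective fv hfvbij
  have L2 : (charmatrix (adjMatrix ℤ (G.induce ({u}ᶜ : Set V)))).submatrix e_u e_u
      = Matrix.fromBlocks Ahat (Bhat.submatrix id (fun _ => 1))
          (Chat.submatrix (fun _ => 1) id) (Dhat.submatrix (fun _ => 1) (fun _ => 1)) := by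
    refine Matrix.ext ?_
    rintro (i | i) (j | j)
    · show charmatrix (adjMatrix ℤ (G.induce ({u}ᶜ : Set V))) (fu (Sum.inl i)) (fu (Sum.inl j))
        = Ahat i j
      rw [cEnt_charmatrix, cEnt_induce, hAhat]
      rfl
    · show charmatrix (adjMatrix ℤ (G.induce ({u}ᶜ : Set V))) (fu (Sum.inl i)) (fu (Sum.inr j))
        = Bhat i 1
      rw [cEnt_charmatrix, cEnt_induce]; rfl
    · show charmatrix (adjMatrix ℤ (G.induce ({u}ᶜ : Set V))) (fu (Sum.inr i)) (fu (Sum.inl j))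
        = Chat 1 j
      rw [cEnt_charmatrix, cEnt_induce]; rfl
    · show charmatrix (adjMatrix ℤ (G.induce ({u}ᶜ : Set V))) (fu (Sum.inr i)) (fu (Sum.inr j))
        = Dhat 1 1
      rw [cEnt_charmatrix, cEnt_induce]; rfl
  have L3 : (charmatrix (adjMatrix ℤ (G.induce ({v}ᶜ : Set V)))).submatrix e_v e_v
      = Matrix.fromBlocks Ahat (Bhat.submatrix id (fun _ => 0))
          (Chat.submatrix (fun _ => 0) id) (Dhat.submatrix (fun _ => 0) (fun _ => 0)) := by
    refine Matrix.ext ?_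
    rintro (i | i) (j | j)
    · show charmatrix (adjMatrix ℤ (G.induce ({v}ᶜ : Set V))) (fv (Sum.inl i)) (fv (Sum.inl j))
        = Ahat i j
      rw [cEnt_charmatrix, cEnt_induce, hAhat]
      rfl
    · show charmatrix (adjMatrix ℤ (G.induce ({v}ᶜ : Set V))) (fv (Sum.inl i)) (fv (Sum.inr j))
        = Bhat i 0
      rw [cEnt_charmatrix, cEnt_induce]; rfl
    · show charmatrix (adjMatrix ℤ (G.induce ({v}ᶜ : Set V))) (fv (Sum.inr i)) (fv (Sum.inl j))
        = Chat 0 j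
      rw [cEnt_charmatrix, cEnt_induce]; rfl
    · show charmatrix (adjMatrix ℤ (G.induce ({v}ᶜ : Set V))) (fv (Sum.inr i)) (fv (Sum.inr j))
        = Dhat 0 0
      rw [cEnt_charmatrix, cEnt_induce]; rfl
  -- move to the fraction field
  set F := FractionRing (Polynomial ℤ) with hFdef
  set ι : Polynomial ℤ →+* F := algebraMap (Polynomial ℤ) F with hιdef
  have hinj : Function.Injective ι := IsFractionRing.injective _ _
  set ψ := (adjMatrix ℤ (G.induce c)).charpoly with hψdef
  have hAhatdet : Ahat.det = ψ := rfl
  have hAFdet : (Ahat.map ι).det = ι ψ := by rw [← RingHom.mapMatrix_apply, ← RingHom.map_det, hAhatdet]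
  have hψ0 : ψ ≠ 0 := (Matrix.charpoly_monic _).ne_zero
  have hιψ0 : ι ψ ≠ 0 := fun hc => hψ0 (hinj (by rw [hc, map_zero]))
  have hAdet0 : (Ahat.map ι).det ≠ 0 := by rw [hAFdet]; exact hιψ0
  have hAunit : IsUnit (Ahat.map ι).det := isUnit_iff_ne_zero.mpr hAdet0
  haveI : Invertible (Ahat.map ι) := (Ahat.map ι).invertibleOfIsUnitDet hAunit
  -- determinant identities via Schur complements
  have hφF : ι ((adjMatrix ℤ G).charpoly)
      = (Ahat.map ι).det
        * (Dhat.map ι - Chat.map ι * (Ahat.map ι)⁻¹ * Bhat.map ι).det := by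
    have h0 : (adjMatrix ℤ G).charpoly = (charmatrix (adjMatrix ℤ G)).det := rfl
    rw [h0, RingHom.map_det, RingHom.mapMatrix_apply,
      ← Matrix.det_submatrix_equiv_self e₂ ((charmatrix (adjMatrix ℤ G)).map ι),
      Matrix.submatrix_map, L1, Matrix.fromBlocks_map, Matrix.det_fromBlocks₁₁,
      Matrix.invOf_eq_nonsing_inv]
  have hφdelF : ι ((adjMatrix ℤ (G.deleteEdges {s(u, v)})).charpoly)
      = (Ahat.map ι).det
        * (Dhat.map ι + EE.map ι - Chat.map ι * (Ahat.map ι)⁻¹ * Bhat.map ι).det := by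
    have h0 : (adjMatrix ℤ (G.deleteEdges {s(u, v)})).charpoly
        = (charmatrix (adjMatrix ℤ (G.deleteEdges {s(u, v)}))).det := rfl
    have hmapadd : (Dhat + EE).map ι = Dhat.map ι + EE.map ι :=
      Matrix.map_add ι (fun a b => map_add ι a b) Dhat EE
    rw [h0, RingHom.map_det, RingHom.mapMatrix_apply,
      ← Matrix.det_submatrix_equiv_self e₂
        ((charmatrix (adjMatrix ℤ (G.deleteEdges {s(u, v)}))).map ι),
      Matrix.submatrix_map, L4, Matrix.fromBlocks_map, Matrix.det_fromBlocks₁₁,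
      Matrix.invOf_eq_nonsing_inv, hmapadd]
  have hφuF : ι ((adjMatrix ℤ (G.induce ({u}ᶜ : Set V))).charpoly)
      = (Ahat.map ι).det
        * (Dhat.map ι - Chat.map ι * (Ahat.map ι)⁻¹ * Bhat.map ι) 1 1 := by
    have h0 : (adjMatrix ℤ (G.induce ({u}ᶜ : Set V))).charpoly
        = (charmatrix (adjMatrix ℤ (G.induce ({u}ᶜ : Set V)))).det := rfl
    rw [h0, RingHom.map_det, RingHom.mapMatrix_apply,
      ← Matrix.det_submatrix_equiv_self e_u
        ((charmatrix (adjMatrix ℤ (G.induce ({u}ᶜ : Set V)))).map ι),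
      Matrix.submatrix_map, L2, Matrix.fromBlocks_map, Matrix.det_fromBlocks₁₁,
      Matrix.invOf_eq_nonsing_inv, Matrix.det_fin_one]
    congr 1
  have hφvF : ι ((adjMatrix ℤ (G.induce ({v}ᶜ : Set V))).charpoly)
      = (Ahat.map ι).det
        * (Dhat.map ι - Chat.map ι * (Ahat.map ι)⁻¹ * Bhat.map ι) 0 0 := by
    have h0 : (adjMatrix ℤ (G.induce ({v}ᶜ : Set V))).charpoly
        = (charmatrix (adjMatrix ℤ (G.induce ({v}ᶜ : Set V)))).det := rfl
    rw [h0, RingHom.map_det, RingHom.mapMatrix_apply,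
      ← Matrix.det_submatrix_equiv_self e_v
        ((charmatrix (adjMatrix ℤ (G.induce ({v}ᶜ : Set V)))).map ι),
      Matrix.submatrix_map, L3, Matrix.fromBlocks_map, Matrix.det_fromBlocks₁₁,
      Matrix.invOf_eq_nonsing_inv, Matrix.det_fin_one]
    congr 1
  -- symmetry of the Schur complement
  have hBT : (Bhat.map ι)ᵀ = Chat.map ι := by
    rw [← Matrix.transpose_map]
    have hbc : Bhatᵀ = Chat := Matrix.ext fun i j => cEnt_symm G _ _
    rw [hbc]
  have hCT : (Chat.map ι)ᵀ = Bhat.map ι := by rw [← hBT, Matrix.transpose_transpose]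
  have hDT : (Dhat.map ι)ᵀ = Dhat.map ι := by
    rw [← Matrix.transpose_map]
    have hdd : Dhatᵀ = Dhat := Matrix.ext fun i j => cEnt_symm G _ _
    rw [hdd]
  have hAT : (Ahat.map ι)ᵀ = Ahat.map ι := by
    rw [← Matrix.transpose_map]
    have haa : Ahatᵀ = Ahat := Matrix.ext fun i j => by
      rw [Matrix.transpose_apply, hAhat, hAhat]
      exact cEnt_symm G _ _
    rw [haa]
  have hAinvT : ((Ahat.map ι)⁻¹)ᵀ = (Ahat.map ι)⁻¹ := by
    rw [Matrix.transpose_nonsing_inv, hAT]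
  have hSMT : (Dhat.map ι - Chat.map ι * (Ahat.map ι)⁻¹ * Bhat.map ι)ᵀ
      = Dhat.map ι - Chat.map ι * (Ahat.map ι)⁻¹ * Bhat.map ι := by
    rw [Matrix.transpose_sub, hDT, Matrix.transpose_mul, Matrix.transpose_mul, hBT, hCT,
      hAinvT, Matrix.mul_assoc]
  have hSMsym : (Dhat.map ι - Chat.map ι * (Ahat.map ι)⁻¹ * Bhat.map ι) 1 0
      = (Dhat.map ι - Chat.map ι * (Ahat.map ι)⁻¹ * Bhat.map ι) 0 1 :=
    calc (Dhat.map ι - Chat.map ι * (Ahat.map ι)⁻¹ * Bhat.map ι) 1 0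
        = (Dhat.map ι - Chat.map ι * (Ahat.map ι)⁻¹ * Bhat.map ι)ᵀ 0 1 := rfl
      _ = (Dhat.map ι - Chat.map ι * (Ahat.map ι)⁻¹ * Bhat.map ι) 0 1 := by rw [hSMT]
  -- the polynomial q
  set r : Polynomial ℤ := (Chat * Ahat.adjugate * Bhat) 0 1 with hrdef
  set q : Polynomial ℤ := -ψ - r with hqdef
  have hadjmap : (Ahat.adjugate).map ι = (Ahat.map ι).adjugate := by
    rw [← RingHom.mapMatrix_apply, ← RingHom.mapMatrix_apply, RingHom.map_adjugate]
  have hsmulinv : (Ahat.map ι).det • (Ahat.map ι)⁻¹ = (Ahat.map ι).adjugate := by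
    rw [Matrix.inv_def, smul_smul, Ring.mul_inverse_cancel _ hAunit, one_smul]
  have hD01 : (Dhat.map ι) 0 1 = -1 := by
    show ι (Dhat 0 1) = -1
    have : Dhat 0 1 = -1 := cEnt_adj G h
    rw [this, map_neg, show ι 1 = 1 from map_one ι]
  have hrF : (Ahat.map ι).det * ((Chat.map ι * (Ahat.map ι)⁻¹ * Bhat.map ι) 0 1) = ι r := by
    have h1 : (Ahat.map ι).det * ((Chat.map ι * (Ahat.map ι)⁻¹ * Bhat.map ι) 0 1)
        = ((Ahat.map ι).det • (Chat.map ι * (Ahat.map ι)⁻¹ * Bhat.map ι)) 0 1 := by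
      rw [Matrix.smul_apply, smul_eq_mul]
    have h2 : (Ahat.map ι).det • (Chat.map ι * (Ahat.map ι)⁻¹ * Bhat.map ι)
        = Chat.map ι * ((Ahat.map ι).det • (Ahat.map ι)⁻¹) * Bhat.map ι := by
      rw [Matrix.mul_smul, Matrix.smul_mul]
    have h3 : (Chat * Ahat.adjugate * Bhat).map ι
        = Chat.map ι * (Ahat.adjugate).map ι * Bhat.map ι := by
      rw [Matrix.map_mul, Matrix.map_mul]
    rw [h1, h2, hsmulinv, ← hadjmap, ← h3]
    rfl
  have hqF : ι q = (Ahat.map ι).det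
      * ((Dhat.map ι - Chat.map ι * (Ahat.map ι)⁻¹ * Bhat.map ι) 0 1) := by
    have h1 : (Dhat.map ι - Chat.map ι * (Ahat.map ι)⁻¹ * Bhat.map ι) 0 1
        = (Dhat.map ι) 0 1 - (Chat.map ι * (Ahat.map ι)⁻¹ * Bhat.map ι) 0 1 := rfl
    rw [hqdef, map_sub, map_neg, h1, mul_sub, hrF, hD01, hAFdet]
    ring
  -- the three claims
  have eq1 : ψ * (adjMatrix ℤ G).charpoly
      = (adjMatrix ℤ (G.induce ({u}ᶜ : Set V))).charpoly
          * (adjMatrix ℤ (G.induce ({v}ᶜ : Set V))).charpoly - q ^ 2 := by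
    apply hinj
    rw [_root_.map_mul, map_sub, _root_.map_mul, map_pow, hφF, hφuF, hφvF, hqF, hAFdet,
      Matrix.det_fin_two, hSMsym]
    ring
  have hentry : ∀ i j : Fin 2,
      (Dhat.map ι + EE.map ι - Chat.map ι * (Ahat.map ι)⁻¹ * Bhat.map ι) i j
      = (Dhat.map ι - Chat.map ι * (Ahat.map ι)⁻¹ * Bhat.map ι) i j + (EE.map ι) i j := by
    intro i j
    simp only [Matrix.sub_apply, Matrix.add_apply]
    ring
  have hEEF00 : (EE.map ι) 0 0 = 0 := by show ι (EE 0 0) = 0; show ι 0 = 0; exact map_zero ι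
  have hEEF01 : (EE.map ι) 0 1 = 1 := by show ι (EE 0 1) = 1; show ι 1 = 1; exact map_one ι
  have hEEF10 : (EE.map ι) 1 0 = 1 := by show ι (EE 1 0) = 1; show ι 1 = 1; exact map_one ι
  have hEEF11 : (EE.map ι) 1 1 = 0 := by show ι (EE 1 1) = 0; show ι 0 = 0; exact map_zero ι
  have eq2 : (adjMatrix ℤ (G.deleteEdges {s(u, v)})).charpoly
      = (adjMatrix ℤ G).charpoly - ψ - 2 * q := by
    apply hinj
    rw [map_sub, map_sub, _root_.map_mul, hφdelF, hφF, hqF, hAFdet,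
      show ι 2 = 2 from map_ofNat ι 2, Matrix.det_fin_two, Matrix.det_fin_two,
      hentry 0 0, hentry 0 1, hentry 1 0, hentry 1 1, hEEF00, hEEF01, hEEF10, hEEF11, hSMsym]
    ring
  have hc1 : cp (G.induce c) = ψ :=
    (charpoly_eq_cp (G.induce c)).symm.trans hψdef.symm
  have hc2 : cp G = (adjMatrix ℤ G).charpoly := (charpoly_eq_cp G).symm
  have hc3 : cp (G.induce ({u}ᶜ : Set V)) = (adjMatrix ℤ (G.induce ({u}ᶜ : Set V))).charpoly :=
    (charpoly_eq_cp _).symm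
  have hc4 : cp (G.induce ({v}ᶜ : Set V)) = (adjMatrix ℤ (G.induce ({v}ᶜ : Set V))).charpoly :=
    (charpoly_eq_cp _).symm
  have hc5 : cp (G.deleteEdges {s(u,v)})
      = (adjMatrix ℤ (G.deleteEdges {s(u,v)})).charpoly := (charpoly_eq_cp _).symm
  refine ⟨q, ?_, ?_, ?_⟩
  · rw [hc1, hc2, hc3, hc4]; exact eq1
  · rw [hc5, hc2, hc1]; exact eq2
  rw [hc1]
  have hq' : q + ψ = -r := by rw [hqdef]; ring
  have hψnat : ψ.natDegree = Fintype.card c := Matrix.charpoly_natDegree_eq_dim _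
  have hψdeg : ψ.degree = (Fintype.card c : ℕ) := by
    rw [Polynomial.degree_eq_natDegree hψ0, hψnat]
  rw [hq', Polynomial.degree_neg, hψdeg]
  by_cases hne : Nonempty c
  · haveI := hne
    have hAdeg : ∀ i j : c, (Ahat i j).natDegree ≤ 1 := fun i j => by
      rw [hAhat]; exact cEnt_natDegree_le G _ _
    have hadjdeg := natDegree_adjugate_le Ahat hAdeg
    have hCdeg : ∀ k : c, (Chat 0 k).natDegree = 0 := fun k =>
      cEnt_off_natDegree G (fun hc => (hmem k).1 hc.symm)
    have hBdeg : ∀ l : c, (Bhat l 1).natDegree = 0 := fun l =>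
      cEnt_off_natDegree G (hmem l).2
    have hrnat : r.natDegree ≤ Fintype.card c - 1 := by
      rw [hrdef, Matrix.mul_apply]
      apply Polynomial.natDegree_sum_le_of_forall_le
      intro l _
      calc ((Chat * Ahat.adjugate) 0 l * Bhat l 1).natDegree
          ≤ ((Chat * Ahat.adjugate) 0 l).natDegree + (Bhat l 1).natDegree :=
            Polynomial.natDegree_mul_le
        _ = ((Chat * Ahat.adjugate) 0 l).natDegree := by rw [hBdeg l, add_zero]
        _ ≤ Fintype.card c - 1 := by
            rw [Matrix.mul_apply]
            apply Polynomial.natDegree_sum_le_of_forall_le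
            intro k _
            calc (Chat 0 k * Ahat.adjugate k l).natDegree
                ≤ (Chat 0 k).natDegree + (Ahat.adjugate k l).natDegree :=
                  Polynomial.natDegree_mul_le
              _ = (Ahat.adjugate k l).natDegree := by rw [hCdeg k, zero_add]
              _ ≤ Fintype.card c - 1 := hadjdeg k l
    calc r.degree ≤ (r.natDegree : WithBot ℕ) := Polynomial.degree_le_natDegree
      _ ≤ ((Fintype.card c - 1 : ℕ) : WithBot ℕ) := by exact_mod_cast hrnat
      _ < ((Fintype.card c : ℕ) : WithBot ℕ) := by
          have h1 : Fintype.card c - 1 < Fintype.card c := Nat.sub_lt Fintype.card_pos one_pos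
          exact_mod_cast h1
  · haveI : IsEmpty c := not_nonempty_iff.mp hne
    have hr0 : r = 0 := by
      rw [hrdef, Matrix.mul_apply]
      simp
    rw [hr0, Polynomial.degree_zero]
    exact WithBot.bot_lt_coe _

lemma Equiv.mapSet_empty' {V W : Type*} {S : Set V} {T : Set W} (f : S ≃ T) :
    f.mapSet ∅ = ∅ := by
  simp [Equiv.mapSet]

lemma Equiv.mapSet_self' {V W : Type*} {S : Set V} {T : Set W} (f : S ≃ T) :
    f.mapSet S = T := by
  unfold Equiv.mapSet
  have h1 : (Subtype.val ⁻¹' S : Set S) = _root_.Set.univ := by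
    ext x; simpa using x.2
  rw [h1, _root_.Set.image_univ, Equiv.range_eq_univ, _root_.Set.image_univ,
    Subtype.range_coe]

lemma Equiv.mapSet_singleton' {V W : Type*} {S : Set V} {T : Set W} (f : S ≃ T) {x : V}
    (hx : x ∈ S) : f.mapSet {x} = {((f ⟨x, hx⟩ : T) : W)} := by
  unfold Equiv.mapSet
  have h1 : (Subtype.val ⁻¹' {x} : Set S) = {⟨x, hx⟩} := by
    ext y; simp [Subtype.ext_iff]
  rw [h1, _root_.Set.image_singleton, _root_.Set.image_singleton]

lemma Equiv.mapSet_mem' {V W : Type*} {S : Set V} {T : Set W} (f : S ≃ T) {X : Set V} {w : V}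
    (hw : w ∈ X) (hX : X ⊆ S) : ((f ⟨w, hX hw⟩ : T) : W) ∈ f.mapSet X :=
  ⟨f ⟨w, hX hw⟩, ⟨⟨w, hX hw⟩, hw, rfl⟩, rfl⟩

lemma charpoly_graph_congr {V : Type*} [Fintype V] {G G' : SimpleGraph V} (h : G = G') :
    (adjMatrix ℤ G).charpoly = (adjMatrix ℤ G').charpoly := by subst h; rfl

/-- **Lemma 2 (first part).** If `(e₁, e₂, g)` are replaceable edges of `G₁` and `G₂`, where
`e₁ = (u₁,u₂)`, `e₂ = (v₁,v₂)` and `g : {u₁,u₂} ≃ {v₁,v₂}` witnesses that the incident vertex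
sets are removal cospectral, then in the edge-deleted graphs `G₁ − e₁` and `G₂ − e₂` the sets
`{u₁,u₂}` and `{v₁,v₂}` remain removal cospectral with the same bijection `g`. -/
theorem removalCospectral_deleteEdges_of_replaceableEdges
    {V W : Type*} [Fintype V] [Fintype W]
    (G₁ : SimpleGraph V) (G₂ : SimpleGraph W)
    (u₁ u₂ : V) (v₁ v₂ : W)
    (he₁ : G₁.Adj u₁ u₂) (he₂ : G₂.Adj v₁ v₂)
    (g : ({u₁, u₂} : Set V) ≃ ({v₁, v₂} : Set W))
    (hg : RemovalCospectral G₁ G₂ {u₁, u₂} {v₁, v₂} g) :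
    RemovalCospectral (G₁.deleteEdges {s(u₁, u₂)}) (G₂.deleteEdges {s(v₁, v₂)})
      {u₁, u₂} {v₁, v₂} g := by
  obtain ⟨q₁, e11, e12, e13⟩ := key_lemma G₁ u₁ u₂ he₁
  obtain ⟨q₂, e21, e22, e23⟩ := key_lemma G₂ v₁ v₂ he₂
  have hu₁m : u₁ ∈ ({u₁, u₂} : Set V) := Set.mem_insert _ _
  have hu₂m : u₂ ∈ ({u₁, u₂} : Set V) := Set.mem_insert_iff.mpr (Or.inr rfl)
  -- φ₁ = φ₂
  have hφ : cp G₁ = cp G₂ := by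
    have h0 := cospectral_iff_cp.mp (hg ∅ (Set.empty_subset _))
    rwa [cp_induce_of_eq_univ G₁ _ Set.compl_empty,
      cp_induce_of_eq_univ G₂ _ (by rw [Equiv.mapSet_empty' g]; exact Set.compl_empty)] at h0
  -- ψ₁ = ψ₂
  have hψeq : cp (G₁.induce ({u₁, u₂}ᶜ : Set V)) = cp (G₂.induce ({v₁, v₂}ᶜ : Set W)) := by
    have h0 := cospectral_iff_cp.mp (hg {u₁, u₂} subset_rfl)
    exact h0.trans (cp_induce_set_congr G₂ (by rw [Equiv.mapSet_self' g]))
  -- products of vertex-deleted charpolys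
  have hprod : cp (G₁.induce ({u₁}ᶜ : Set V)) * cp (G₁.induce ({u₂}ᶜ : Set V))
      = cp (G₂.induce ({v₁}ᶜ : Set W)) * cp (G₂.induce ({v₂}ᶜ : Set W)) := by
    have h1 := cospectral_iff_cp.mp (hg {u₁} (Set.singleton_subset_iff.mpr hu₁m))
    have h2 := cospectral_iff_cp.mp (hg {u₂} (Set.singleton_subset_iff.mpr hu₂m))
    have h1' := h1.trans (cp_induce_set_congr G₂
      (congrArg (Compl.compl : Set W → Set W) (Equiv.mapSet_singleton' g hu₁m)))
    have h2' := h2.trans (cp_induce_set_congr G₂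
      (congrArg (Compl.compl : Set W → Set W) (Equiv.mapSet_singleton' g hu₂m)))
    have ha₁ : ((g ⟨u₁, hu₁m⟩ : _) : W) = v₁ ∨ ((g ⟨u₁, hu₁m⟩ : _) : W) = v₂ := by
      rcases Set.mem_insert_iff.mp (g ⟨u₁, hu₁m⟩).2 with h | h
      · exact Or.inl h
      · exact Or.inr (Set.mem_singleton_iff.mp h)
    have ha₂ : ((g ⟨u₂, hu₂m⟩ : _) : W) = v₁ ∨ ((g ⟨u₂, hu₂m⟩ : _) : W) = v₂ := by
      rcases Set.mem_insert_iff.mp (g ⟨u₂, hu₂m⟩).2 with h | h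
      · exact Or.inl h
      · exact Or.inr (Set.mem_singleton_iff.mp h)
    have hane : ((g ⟨u₁, hu₁m⟩ : _) : W) ≠ ((g ⟨u₂, hu₂m⟩ : _) : W) := by
      intro hc
      have h3 : (⟨u₁, hu₁m⟩ : ({u₁, u₂} : Set V)) = ⟨u₂, hu₂m⟩ :=
        g.injective (Subtype.ext hc)
      exact he₁.ne (congrArg Subtype.val h3)
    rw [h1', h2']
    rcases ha₁ with hv1 | hv2
    · rcases ha₂ with hv1' | hv2'
      · exact absurd (hv1.trans hv1'.symm) hane
      · rw [cp_induce_set_congr G₂ (congrArg Compl.compl (by rw [hv1] :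
            ({((g ⟨u₁, hu₁m⟩ : _) : W)} : Set W) = {v₁})),
          cp_induce_set_congr G₂ (congrArg Compl.compl (by rw [hv2'] :
            ({((g ⟨u₂, hu₂m⟩ : _) : W)} : Set W) = {v₂}))]
    · rcases ha₂ with hv1' | hv2'
      · rw [cp_induce_set_congr G₂ (congrArg Compl.compl (by rw [hv2] :
            ({((g ⟨u₁, hu₁m⟩ : _) : W)} : Set W) = {v₂})),
          cp_induce_set_congr G₂ (congrArg Compl.compl (by rw [hv1'] :
            ({((g ⟨u₂, hu₂m⟩ : _) : W)} : Set W) = {v₁}))]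
        ring
      · exact absurd (hv2.trans hv2'.symm) hane
  -- q₁ = q₂
  have hsq : q₁ ^ 2 = q₂ ^ 2 := by
    have h1 : q₁ ^ 2 = cp (G₁.induce ({u₁}ᶜ : Set V)) * cp (G₁.induce ({u₂}ᶜ : Set V))
        - cp (G₁.induce ({u₁, u₂}ᶜ : Set V)) * cp G₁ := by linear_combination e11
    have h2 : q₂ ^ 2 = cp (G₂.induce ({v₁}ᶜ : Set W)) * cp (G₂.induce ({v₂}ᶜ : Set W))
        - cp (G₂.induce ({v₁, v₂}ᶜ : Set W)) * cp G₂ := by linear_combination e21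
    rw [h1, h2, hprod, hψeq, hφ]
  have hqeq : q₁ = q₂ := by
    have hfac : (q₁ - q₂) * (q₁ + q₂) = 0 := by linear_combination hsq
    rcases mul_eq_zero.mp hfac with h0 | h0
    · exact sub_eq_zero.mp h0
    · exfalso
      rw [hψeq] at e13
      set ψ := cp (G₂.induce ({v₁, v₂}ᶜ : Set W)) with hψdef
      have hψ0 : ψ ≠ 0 := by
        have hcc : (adjMatrix ℤ (G₂.induce ({v₁, v₂}ᶜ : Set W))).charpoly
            = cp (G₂.induce ({v₁, v₂}ᶜ : Set W)) := charpoly_eq_cp _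
        rw [hψdef, ← hcc]
        exact (Matrix.charpoly_monic _).ne_zero
      have hsum : (q₁ + ψ) + (q₂ + ψ) = 2 * ψ := by linear_combination (h0 : q₁ + q₂ = 0)
      have hd2 : ((2 : Polynomial ℤ) * ψ).degree = ψ.degree := by
        rw [Polynomial.degree_mul]
        have h2d : (2 : Polynomial ℤ).degree = 0 := by
          have h2c : (2 : Polynomial ℤ) = Polynomial.C 2 := by
            rw [map_ofNat]
          rw [h2c, Polynomial.degree_C (by norm_num)]
        rw [h2d, zero_add]
      have hlt : ((q₁ + ψ) + (q₂ + ψ)).degree < ψ.degree :=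
        lt_of_le_of_lt (Polynomial.degree_add_le _ _) (max_lt e13 e23)
      rw [hsum, hd2] at hlt
      exact lt_irrefl _ hlt
  -- the edge-deleted graphs are cospectral
  have hdel : cp (G₁.deleteEdges {s(u₁, u₂)}) = cp (G₂.deleteEdges {s(v₁, v₂)}) := by
    rw [e12, e22, hφ, hψeq, hqeq]
  -- conclude
  intro X hX
  rcases Set.eq_empty_or_nonempty X with rfl | ⟨w, hw⟩
  · refine cospectral_iff_cp.mpr ?_
    rw [cp_induce_of_eq_univ _ _ Set.compl_empty,
      cp_induce_of_eq_univ _ _ (by rw [Equiv.mapSet_empty' g]; exact Set.compl_empty)]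
    exact hdel
  · have hwS : w ∈ ({u₁, u₂} : Set V) := hX hw
    have hG1 : (G₁.deleteEdges {s(u₁, u₂)}).induce Xᶜ = G₁.induce Xᶜ :=
      induce_deleteEdges_eq G₁ hw (by simpa using hwS)
    have hw' : ((g ⟨w, hX hw⟩ : _) : W) ∈ Equiv.mapSet g X := Equiv.mapSet_mem' g hw hX
    have hw'T : ((g ⟨w, hX hw⟩ : _) : W) = v₁ ∨ ((g ⟨w, hX hw⟩ : _) : W) = v₂ := by
      rcases Set.mem_insert_iff.mp (g ⟨w, hX hw⟩).2 with h | h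
      · exact Or.inl h
      · exact Or.inr (Set.mem_singleton_iff.mp h)
    have hG2 : (G₂.deleteEdges {s(v₁, v₂)}).induce (Equiv.mapSet g X)ᶜ
        = G₂.induce (Equiv.mapSet g X)ᶜ :=
      induce_deleteEdges_eq G₂ hw' hw'T
    refine cospectral_iff_cp.mpr ?_
    rw [cp_graph_congr hG1, cp_graph_congr hG2]
    exact cospectral_iff_cp.mp (hg X hX)
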